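/- Let R be a π-regular ring. Then R is semiperfect if and only if R does not contain an infinite set of nonzero orthogonal idempotents. -/

import Mathlib

/-- The chain `aR ⊇ a²R ⊇ …` of right ideals stabilizes. -/
def RightChainStab {R : Type*} [Ring R] (a : R) : Prop :=
  ∃ n : ℕ, ∀ k ≥ n, {x : R | ∃ r, x = a ^ k * r} = {x : R | ∃ r, x = a ^ n * r}

/-- The chain `Ra ⊇ Ra² ⊇ …` of left ideals stabilizes. -/
def LeftChainStab {R : Type*} [Ring R] (a : R) : Prop :=
  ∃ n : ℕ, ∀ k ≥ n, {x : R | ∃ r, x = r * a ^ k} = {x : R | ∃ r, x = r * a ^ n}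

/-- An element is π-regular if both chains stabilize. -/
def IsPiRegularElem {R : Type*} [Ring R] (a : R) : Prop :=
  RightChainStab a ∧ LeftChainStab a

/-- The corner ring `eRe` (with unity `e`) is a local ring: `e ≠ 0` and for every
`x ∈ eRe`, either `x` or `e - x` is invertible in `eRe`. -/
def IsLocalCorner {R : Type*} [Ring R] (e : R) : Prop :=
  e ≠ 0 ∧ ∀ x : R, x = e * x * e →
    (∃ y : R, y = e * y * e ∧ x * y = e ∧ y * x = e) ∨
    (∃ y : R, y = e * y * e ∧ (e - x) * y = e ∧ y * (e - x) = e)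

/-- A ring is semiperfect iff `1` is a sum of pairwise orthogonal idempotents
whose corner rings are local. -/
def IsSemiperfectRing (R : Type*) [Ring R] : Prop :=
  ∃ (n : ℕ) (e : Fin n → R),
    (∀ i, IsIdempotentElem (e i)) ∧
    (∀ i j, i ≠ j → e i * e j = 0) ∧
    (∑ i, e i = 1) ∧
    ∀ i, IsLocalCorner (e i)

/-- `R` contains no infinite set of nonzero pairwise orthogonal idempotents. -/
def NoInfiniteOrthogonalIdempotents (R : Type*) [Ring R] : Prop :=
  ¬ ∃ f : ℕ → R, (∀ n, IsIdempotentElem (f n)) ∧ (∀ n, f n ≠ 0) ∧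
      ∀ m n, m ≠ n → f m * f n = 0

namespace PiRegAux
variable {R : Type*} [Ring R]

lemma mulr {a b c : R} (h : a * b = c) (z : R) : a * (b * z) = c * z := by
  rw [← mul_assoc, h]

lemma corner_of {e x : R} (hee : e * e = e) (hx : x = e * x * e) :
    e * x = x ∧ x * e = x := by
  constructor
  · conv_lhs => rw [hx]
    rw [show e * (e * x * e) = (e * e) * x * e by noncomm_ring, hee, ← hx]
  · conv_lhs => rw [hx]
    rw [show (e * x * e) * e = e * x * (e * e) by noncomm_ring, hee]
    exact hx.symm

lemma of_corner {e x : R} (h1 : e * x = x) (h2 : x * e = x) : x = e * x * e := by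
  rw [h1, h2]

/-- In a local corner, a one-sided (right) inverse is two-sided. -/
lemma rinv_to_inv {e a b : R} (hl : IsLocalCorner e) (hee : e * e = e)
    (ha1 : e * a = a) (ha2 : a * e = a) (hb1 : e * b = b) (hb2 : b * e = b)
    (hab : a * b = e) :
    ∃ y : R, y = e * y * e ∧ a * y = e ∧ y * a = e := by
  have hba : (b * a) = e * (b * a) * e := of_corner (mulr hb1 a) (by rw [mul_assoc, ha2])
  rcases hl.2 _ hba with ⟨z, hz, h1, h2⟩ | ⟨z, hz, h1, h2⟩
  · -- b*a invertible, and idempotent, hence b*a = e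
    have hidem : (b * a) * (b * a) = b * a := by
      rw [show b * a * (b * a) = b * (a * b) * a by noncomm_ring, hab, mul_assoc, mulr hb2 a]
    have hbae : b * a = e := by
      have h3 : z * (b * a) * (b * a) = z * (b * a) := by rw [mul_assoc, hidem]
      rw [h2] at h3
      rw [← h3, (corner_of hee hba).1]
    exact ⟨b, of_corner hb1 hb2, hab, hbae⟩
  · -- e - b*a invertible; but a*(e-b*a) = 0, contradiction
    exfalso
    have hkill : a * (e - b * a) = 0 := by
      rw [mul_sub, ha2, show a * (b * a) = (a * b) * a by noncomm_ring, hab, ha1, sub_self]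
    have ha0 : a = 0 := by
      have h4 := congrArg (a * ·) h1
      rw [show a * ((e - b * a) * z) = (a * (e - b * a)) * z by noncomm_ring, hkill,
        zero_mul, ha2] at h4
      exact h4.symm
    apply hl.1
    rw [← hab, ha0, zero_mul]

lemma list_sum_corner {e : R} : ∀ {L : List R}, (∀ x ∈ L, e * x = x ∧ x * e = x) →
    e * L.sum = L.sum ∧ L.sum * e = L.sum := by
  intro L
  induction L with
  | nil => intro _; simp
  | cons a L ih =>
    intro hmem
    have ha := hmem a (List.mem_cons_self)
    have hL := ih (fun x hx => hmem x (List.mem_cons_of_mem a hx))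
    simp [List.sum_cons, mul_add, add_mul, ha.1, ha.2, hL.1, hL.2]

/-- If a sum of corner elements is invertible in the corner, some summand is invertible. -/
lemma sum_unit {e : R} (hl : IsLocalCorner e) (hee : e * e = e) :
    ∀ (L : List R), (∀ x ∈ L, e * x = x ∧ x * e = x) →
    ∀ u : R, e * u = u → u * e = u → L.sum * u = e → u * L.sum = e →
    ∃ x ∈ L, ∃ y : R, y = e * y * e ∧ x * y = e ∧ y * x = e := by
  intro L
  induction L with
  | nil =>
    intro _ u _ _ h1 _
    exfalso; apply hl.1
    simp at h1; exact h1.symm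
  | cons a L ih =>
    intro hmem u hu1 hu2 h1 h2
    have ha := hmem a (List.mem_cons_self)
    have hLmem := fun x hx => hmem x (List.mem_cons_of_mem a hx)
    rw [List.sum_cons, add_mul] at h1
    have haw : (a * u) = e * (a * u) * e :=
      of_corner (mulr ha.1 u) (by rw [mul_assoc, hu2])
    rcases hl.2 _ haw with ⟨z, hz, hz1, hz2⟩ | ⟨z, hz, hz1, hz2⟩
    · have hzc := corner_of hee hz
      obtain ⟨y, hy, hy1, hy2⟩ := rinv_to_inv hl hee ha.1 ha.2
        (mulr hu1 z) (by rw [mul_assoc, hzc.2]) (by rw [← mul_assoc, hz1])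
      exact ⟨a, List.mem_cons_self, y, hy, hy1, hy2⟩
    · have hrest : L.sum * u = e - a * u := eq_sub_of_add_eq' h1
      rw [← hrest] at hz1 hz2
      have hzc := corner_of hee hz
      have hLc := list_sum_corner (e := e) hLmem
      obtain ⟨y, hy, hy1, hy2⟩ := rinv_to_inv hl hee hLc.1 hLc.2
        (mulr hu1 z) (by rw [mul_assoc, hzc.2]) (by rw [← mul_assoc, hz1])
      have hyc := corner_of hee hy
      obtain ⟨x, hx, w, hw⟩ := ih hLmem y hyc.1 hyc.2 hy1 hy2
      exact ⟨x, List.mem_cons_of_mem a hx, w, hw⟩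

lemma transfer {E e g v : R} (hEE : E * E = E) (hee : e * e = e)
    (heE : e * E = e) (hEe : E * e = e)
    (hgE1 : E * g = g) (hgE2 : g * E = g)
    (hv1 : e * v = v) (hv2 : v * e = v) (hgv : e * (g * v) = e)
    {m : ℕ} (f : Fin m → R)
    (hfi : ∀ k, f k * f k = f k) (hf0 : ∀ k, f k ≠ 0)
    (hforth : ∀ j k, j ≠ k → f j * f k = 0)
    (hfE1 : ∀ k, E * f k = f k) (hfE2 : ∀ k, f k * E = f k)
    (hfg : ∀ k, f k * g = 0) :
    ∃ F : Fin m → R, (∀ k, F k * F k = F k) ∧ (∀ k, F k ≠ 0) ∧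
      (∀ j k, j ≠ k → F j * F k = 0) ∧
      (∀ k, (E - e) * F k = F k ∧ F k * (E - e) = F k) := by
  obtain ⟨h, hh_def⟩ : ∃ h : R, h = g * v := ⟨_, rfl⟩
  have hfh : ∀ k, f k * h = 0 := fun k => by
    rw [hh_def, ← mul_assoc, hfg, zero_mul]
  have hvE : v * E = v := by rw [← hv2, mul_assoc, heE]
  have hEh : E * h = h := by rw [hh_def, ← mul_assoc, hgE1]
  have hhE : h * E = h := by rw [hh_def, mul_assoc, hvE]
  have heh : e * h = e := by rw [hh_def]; exact hgv
  have hhe : h * e = h := by rw [hh_def, mul_assoc, hv2]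
  have hhh : h * h = h := by
    rw [hh_def]
    calc g * v * (g * v) = g * (v * e) * (g * v) := by rw [hv2]
    _ = g * (v * (e * (g * v))) := by noncomm_ring
    _ = g * (v * e) := by rw [hgv]
    _ = g * v := by rw [hv2]
  obtain ⟨a, ha_def⟩ : ∃ a : R, a = E - h := ⟨_, rfl⟩
  obtain ⟨b, hb_def⟩ : ∃ b : R, b = E - e := ⟨_, rfl⟩
  have haa : a * a = a := by
    rw [ha_def, show (E - h) * (E - h) = E * E - E * h - h * E + h * h from by noncomm_ring,
      hEE, hEh, hhE, hhh]; abel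
  have hbb : b * b = b := by
    rw [hb_def, show (E - e) * (E - e) = E * E - E * e - e * E + e * e from by noncomm_ring,
      hEE, hEe, heE, hee]; abel
  have hba : b * a = a := by
    rw [hb_def, ha_def, show (E - e) * (E - h) = E * E - E * h - e * E + e * h from by
      noncomm_ring, hEE, hEh, heE, heh]; abel
  have hab : a * b = b := by
    rw [ha_def, hb_def, show (E - h) * (E - e) = E * E - E * e - h * E + h * e from by
      noncomm_ring, hEE, hEe, hhE, hhe]; abel
  have hkey : ∀ j k, f j * a * f k = f j * f k := fun j k => by
    rw [ha_def, mul_sub, hfE2, sub_mul, hfh, zero_mul, sub_zero]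
  obtain ⟨f', hf'⟩ : ∃ f' : Fin m → R, ∀ k, f' k = a * f k * a :=
    ⟨fun k => a * f k * a, fun _ => rfl⟩
  have hf'prod : ∀ j k, f' j * f' k = a * (f j * a * f k) * a := fun j k => by
    rw [hf' j, hf' k]
    calc a * f j * a * (a * f k * a) = a * f j * (a * a) * f k * a := by noncomm_ring
    _ = a * (f j * a * f k) * a := by rw [haa]; noncomm_ring
  have hf'i : ∀ k, f' k * f' k = f' k := fun k => by
    rw [hf'prod, hkey, hfi]; exact (hf' k).symm
  have hf'orth : ∀ j k, j ≠ k → f' j * f' k = 0 := fun j k hjk => by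
    rw [hf'prod, hkey, hforth j k hjk, mul_zero, zero_mul]
  have hbf' : ∀ k, b * f' k = f' k := fun k => by
    rw [hf' k]
    calc b * (a * f k * a) = (b * a) * f k * a := by noncomm_ring
    _ = a * f k * a := by rw [hba]
  have hf'a : ∀ k, f' k * a = f' k := fun k => by
    rw [hf' k, mul_assoc, mul_assoc, haa, ← mul_assoc]
  refine ⟨fun k => b * f' k * b, fun k => ?_, fun k => ?_, fun j k hjk => ?_, fun k => ?_⟩
  · show b * f' k * b * (b * f' k * b) = b * f' k * b
    calc b * f' k * b * (b * f' k * b) = b * f' k * ((b * b) * f' k) * b := by noncomm_ring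
    _ = b * f' k * (b * f' k) * b := by rw [hbb]
    _ = b * f' k * f' k * b := by rw [hbf']
    _ = b * f' k * b := by rw [mul_assoc b (f' k) (f' k), hf'i]
  · show b * f' k * b ≠ 0
    intro hFk
    apply hf0 k
    have h1 : a * (b * f' k * b) * a = f' k := by
      calc a * (b * f' k * b) * a = (a * b) * f' k * (b * a) := by noncomm_ring
      _ = b * f' k * a := by rw [hab, hba]
      _ = f' k * a := by rw [hbf']
      _ = f' k := hf'a k
    rw [hFk] at h1
    rw [mul_zero, zero_mul] at h1
    have h2 : f k * f' k * f k = f k := by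
      rw [hf' k]
      calc f k * (a * f k * a) * f k = (f k * a * f k) * (a * f k) := by noncomm_ring
      _ = (f k * f k) * (a * f k) := by rw [hkey]
      _ = f k * a * f k := by rw [hfi]; noncomm_ring
      _ = f k * f k := hkey k k
      _ = f k := hfi k
    rw [← h1, mul_zero, zero_mul] at h2
    exact h2.symm
  · show b * f' j * b * (b * f' k * b) = 0
    calc b * f' j * b * (b * f' k * b) = b * f' j * ((b * b) * f' k) * b := by noncomm_ring
    _ = b * f' j * (b * f' k) * b := by rw [hbb]
    _ = b * f' j * f' k * b := by rw [hbf' j, hbf' k]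
    _ = 0 := by rw [mul_assoc b (f' j) (f' k), hf'orth j k hjk, mul_zero, zero_mul]
  · show (E - e) * (b * f' k * b) = b * f' k * b ∧ (b * f' k * b) * (E - e) = b * f' k * b
    rw [← hb_def]
    constructor
    · calc b * (b * f' k * b) = (b * b) * f' k * b := by noncomm_ring
      _ = b * f' k * b := by rw [hbb]
    · calc (b * f' k * b) * b = b * f' k * (b * b) := by noncomm_ring
      _ = b * f' k * b := by rw [hbb]

lemma corner_elem {e : R} (hee : e * e = e) (z : R) :
    e * (e * z * e) = e * z * e ∧ (e * z * e) * e = e * z * e :=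
  ⟨by rw [show e * (e * z * e) = (e * e) * z * e from by noncomm_ring, hee],
   by rw [show (e * z * e) * e = e * z * (e * e) from by noncomm_ring, hee]⟩

/-- `n` orthogonal local blocks summing to `E` rule out `n+1` orthogonal nonzero
idempotents in the corner of `E`. -/
lemma bound : ∀ (n : ℕ) (E : R) (e : Fin n → R),
    (∀ i, e i * e i = e i) → (∀ i j, i ≠ j → e i * e j = 0) →
    (∑ i, e i) = E → (∀ i, IsLocalCorner (e i)) →
    ∀ f : Fin (n+1) → R, (∀ k, f k * f k = f k) → (∀ k, f k ≠ 0) →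
    (∀ j k, j ≠ k → f j * f k = 0) →
    (∀ k, E * f k = f k) → (∀ k, f k * E = f k) → False := by
  intro n
  induction n with
  | zero =>
    intro E e _ _ hsum _ f _ hf0 _ hE1 _
    apply hf0 0
    have hE0 : E = 0 := by rw [← hsum]; simp
    rw [← hE1 0, hE0, zero_mul]
  | succ n ih =>
    intro E e hei heo hsum hloc f hfi hf0 hfo hfE1 hfE2
    have ho : OrthogonalIdempotents e := ⟨hei, heo⟩
    have hof : OrthogonalIdempotents f := ⟨hfi, hfo⟩
    have hEE : E * E = E := by rw [← hsum]; exact ho.isIdempotentElem_sum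
    have hEe : ∀ i, E * e i = e i := by
      intro i
      rw [← hsum, Finset.sum_mul]
      rw [Finset.sum_eq_single i (fun j _ hji => heo j i hji)
        (fun hi => absurd (Finset.mem_univ i) hi), hei]
    have heE : ∀ i, e i * E = e i := fun i => by
      rw [← hsum]; exact ho.mul_sum_of_mem (Finset.mem_univ i)
    obtain ⟨S, hS_def⟩ : ∃ S : R, S = ∑ k, f k := ⟨_, rfl⟩
    have hSS : S * S = S := by rw [hS_def]; exact hof.isIdempotentElem_sum
    have hES : E * S = S := by
      rw [hS_def, Finset.mul_sum]
      exact Finset.sum_congr rfl fun k _ => hfE1 k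
    have hSE : S * E = S := by
      rw [hS_def, Finset.sum_mul]
      exact Finset.sum_congr rfl fun k _ => hfE2 k
    have hfS : ∀ k, f k * S = f k := fun k => by
      rw [hS_def]; exact hof.mul_sum_of_mem (Finset.mem_univ k)
    obtain ⟨r, hr_def⟩ : ∃ r : R, r = E - S := ⟨_, rfl⟩
    have hfr : ∀ k, f k * r = 0 := fun k => by
      rw [hr_def, mul_sub, hfE2, hfS, sub_self]
    have hEr : E * r = r := by rw [hr_def, mul_sub, hEE, hES]
    have hrE : r * E = r := by rw [hr_def, sub_mul, hEE, hSE]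
    have he0 : e 0 * e 0 = e 0 := hei 0
    have hl0 : IsLocalCorner (e 0) := hloc 0
    obtain ⟨L, hL_def⟩ : ∃ L : List R,
        L = (List.ofFn fun k : Fin (n+2) => e 0 * f k * e 0) ++ [e 0 * r * e 0] := ⟨_, rfl⟩
    have hmem : ∀ x ∈ L, e 0 * x = x ∧ x * e 0 = x := by
      intro x hx
      rw [hL_def] at hx
      rcases List.mem_append.1 hx with hx | hx
      · obtain ⟨j, hj⟩ := List.mem_ofFn.1 hx
        rw [← hj]
        exact corner_elem he0 (f j)
      · rw [List.mem_singleton.1 hx]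
        exact corner_elem he0 r
    have hLsum : L.sum = e 0 := by
      rw [hL_def, List.sum_append, List.sum_ofFn]
      have h1 : ∑ k : Fin (n+2), e 0 * f k * e 0 = e 0 * S * e 0 := by
        rw [hS_def, Finset.mul_sum, Finset.sum_mul]
      rw [h1]
      have h2 : ([e 0 * r * e 0] : List R).sum = e 0 * r * e 0 := by simp
      rw [h2, show e 0 * S * e 0 + e 0 * r * e 0 = e 0 * (S + r) * e 0 from by noncomm_ring,
        show S + r = E from by rw [hr_def]; abel, heE 0, he0]
    obtain ⟨x, hxL, y, hy, hxy1, hxy2⟩ :=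
      sum_unit hl0 he0 L hmem (e 0) he0 he0 (by rw [hLsum, he0]) (by rw [hLsum, he0])
    have hyc := corner_of he0 hy
    -- the new block family for the inductive step
    have hsum' : ∑ i : Fin n, e i.succ = E - e 0 := by
      apply eq_sub_of_add_eq'
      rw [← Fin.sum_univ_succ, hsum]
    have happly : ∀ F : Fin (n+1) → R, (∀ k, F k * F k = F k) → (∀ k, F k ≠ 0) →
        (∀ j k, j ≠ k → F j * F k = 0) →
        (∀ k, (E - e 0) * F k = F k ∧ F k * (E - e 0) = F k) → False := by
      intro F h1 h2 h3 h4
      exact ih (E - e 0) (fun i => e i.succ) (fun i => hei _)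
        (fun i j hij => heo _ _ (fun hh => hij (Fin.succ_injective n hh))) hsum'
        (fun i => hloc _) F h1 h2 h3 (fun k => (h4 k).1) (fun k => (h4 k).2)
    rw [hL_def] at hxL
    rcases List.mem_append.1 hxL with hx | hx
    · -- x = e0 * f j * e0 : exchange with f j, drop index j
      obtain ⟨j, hj⟩ := List.mem_ofFn.1 hx
      rw [← hj] at hxy1 hxy2
      have hgv : e 0 * (f j * y) = e 0 := by
        rw [← hyc.1, show e 0 * (f j * (e 0 * y)) = (e 0 * f j * e 0) * y from by noncomm_ring]
        exact hxy1
      obtain ⟨F, hF1, hF2, hF3, hF4⟩ := transfer hEE he0 (heE 0) (hEe 0)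
        (hfE1 j) (hfE2 j) hyc.1 hyc.2 hgv
        (fun k : Fin (n+1) => f (j.succAbove k))
        (fun k => hfi _) (fun k => hf0 _)
        (fun k k' hkk => hfo _ _ (fun hh => hkk (Fin.succAbove_right_injective (p := j) hh)))
        (fun k => hfE1 _) (fun k => hfE2 _)
        (fun k => hfo _ _ (Fin.succAbove_ne j k))
      exact happly F hF1 hF2 hF3 hF4
    · -- x = e0 * r * e0 : exchange with r, keep all but the last index
      rw [List.mem_singleton.1 hx] at hxy1 hxy2
      have hgv : e 0 * (r * y) = e 0 := by
        rw [← hyc.1, show e 0 * (r * (e 0 * y)) = (e 0 * r * e 0) * y from by noncomm_ring]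
        exact hxy1
      obtain ⟨F, hF1, hF2, hF3, hF4⟩ := transfer hEE he0 (heE 0) (hEe 0)
        hEr hrE hyc.1 hyc.2 hgv
        (fun k : Fin (n+1) => f k.castSucc)
        (fun k => hfi _) (fun k => hf0 _)
        (fun k k' hkk => hfo _ _ (fun hh => hkk (Fin.castSucc_injective (n+1) hh)))
        (fun k => hfE1 _) (fun k => hfE2 _)
        (fun k => hfr _)
      exact happly F hF1 hF2 hF3 hF4

/-- A primitive idempotent: a nonzero idempotent with no nontrivial subidempotent. -/
def Primi (p : R) : Prop := p * p = p ∧ p ≠ 0 ∧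
  ∀ g : R, g * g = g → p * g = g → g * p = g → g = 0 ∨ g = p

/-- Fitting decomposition for a strongly π-regular element of a corner. -/
lemma fitting {x : R} {n : ℕ} (hn : 1 ≤ n) {s t : R}
    (h1 : x ^ n = x ^ (n+1) * s) (h2 : x ^ n = t * x ^ (n+1)) :
    ∃ e d : R, e = x ^ n * s ^ n ∧ e * e = e ∧ x ^ n * e = x ^ n ∧
      x * e = e * x ∧ x * d = e ∧ d * x = e ∧ e * d = d ∧ d * e = d := by
  -- iterated identities
  have key1 : ∀ k, x ^ n = x ^ (n+k) * s ^ k := by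
    intro k
    induction k with
    | zero => simp
    | succ k ihk =>
      calc x ^ n = x ^ (n+1) * s := h1
      _ = x * x ^ n * s := by rw [pow_succ']
      _ = x * (x ^ (n+k) * s ^ k) * s := by rw [← ihk]
      _ = (x * x ^ (n+k)) * (s ^ k * s) := by noncomm_ring
      _ = x ^ (n+(k+1)) * s ^ (k+1) := by
          rw [← pow_succ', ← pow_succ]
          exact rfl
  have key2 : x ^ n * s = t * x ^ n := by
    conv_lhs => rw [h2]
    rw [mul_assoc]
    conv_rhs => rw [h1]
  have key3 : ∀ k, x ^ n * s ^ k = t ^ k * x ^ n := by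
    intro k
    induction k with
    | zero => simp
    | succ k ihk =>
      calc x ^ n * s ^ (k+1) = (x ^ n * s) * s ^ k := by rw [pow_succ']; noncomm_ring
      _ = t * (x ^ n * s ^ k) := by rw [key2, mul_assoc]
      _ = t * (t ^ k * x ^ n) := by rw [ihk]
      _ = t ^ (k+1) * x ^ n := by rw [← mul_assoc, ← pow_succ']
  have key4 : x ^ n * (x ^ n * s ^ n) = x ^ n := by
    rw [← mul_assoc, ← pow_add]
    exact (key1 n).symm
  refine ⟨x ^ n * s ^ n, x ^ n * s ^ (n+1), rfl, ?_, key4, ?_, ?_, ?_, ?_, ?_⟩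
  · -- idempotent
    calc (x ^ n * s ^ n) * (x ^ n * s ^ n) = (t ^ n * x ^ n) * (x ^ n * s ^ n) := by rw [← key3]
    _ = t ^ n * (x ^ n * (x ^ n * s ^ n)) := by noncomm_ring
    _ = t ^ n * x ^ n := by rw [key4]
    _ = x ^ n * s ^ n := (key3 n).symm
  · -- x * e = e * x
    obtain ⟨m, rfl⟩ : ∃ m, n = m + 1 := ⟨n - 1, by omega⟩
    have hxe : x * (x ^ (m+1) * s ^ (m+1)) = x ^ (m+1) * s ^ m := by
      calc x * (x ^ (m+1) * s ^ (m+1)) = (x * x ^ (m+1)) * (s * s ^ m) := by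
            rw [pow_succ' s m]; noncomm_ring
      _ = (x ^ (m+1+1) * s) * s ^ m := by rw [← pow_succ' x (m+1)]; noncomm_ring
      _ = x ^ (m+1) * s ^ m := by rw [← h1]
    have hex : (x ^ (m+1) * s ^ (m+1)) * x = t ^ (m+1) * x ^ (m+1+1) := by
      rw [key3, mul_assoc, ← pow_succ]
    rw [hxe, hex]
    calc x ^ (m+1) * s ^ m = t ^ m * x ^ (m+1) := key3 m
    _ = t ^ m * (t * x ^ (m+1+1)) := by rw [← h2]
    _ = t ^ (m+1) * x ^ (m+1+1) := by rw [← mul_assoc, ← pow_succ]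
  · -- x * d = e
    calc x * (x ^ n * s ^ (n+1)) = (x * x ^ n) * (s * s ^ n) := by rw [pow_succ']; noncomm_ring
    _ = (x ^ (n+1) * s) * s ^ n := by rw [← pow_succ']; noncomm_ring
    _ = x ^ n * s ^ n := by rw [← h1]
  · -- d * x = e
    calc (x ^ n * s ^ (n+1)) * x = (t ^ (n+1) * x ^ n) * x := by rw [key3]
    _ = t ^ n * (t * x ^ (n+1)) := by rw [pow_succ, pow_succ]; noncomm_ring
    _ = t ^ n * x ^ n := by rw [← h2]
    _ = x ^ n * s ^ n := (key3 n).symm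
  · -- e * d = d
    calc (x ^ n * s ^ n) * (x ^ n * s ^ (n+1)) = (t ^ n * x ^ n) * (x ^ n * (s ^ n * s)) := by
          rw [← key3, pow_succ]
    _ = t ^ n * ((x ^ n * (x ^ n * s ^ n)) * s) := by noncomm_ring
    _ = t ^ n * (x ^ n * s) := by rw [key4]
    _ = (t ^ n * (t * x ^ n)) := by rw [key2]
    _ = t ^ (n+1) * x ^ n := by rw [← mul_assoc, ← pow_succ]
    _ = x ^ n * s ^ (n+1) := (key3 (n+1)).symm
  · -- d * e = d
    calc (x ^ n * s ^ (n+1)) * (x ^ n * s ^ n) = (t ^ (n+1) * x ^ n) * (x ^ n * s ^ n) := by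
          rw [key3]
    _ = t ^ (n+1) * (x ^ n * (x ^ n * s ^ n)) := by noncomm_ring
    _ = t ^ (n+1) * x ^ n := by rw [key4]
    _ = x ^ n * s ^ (n+1) := (key3 (n+1)).symm

/-- π-regularity gives strong π-regularity data. -/
lemma exists_spr {x : R} (hpi : IsPiRegularElem x) :
    ∃ n : ℕ, 1 ≤ n ∧ (∃ s, x ^ n = x ^ (n+1) * s) ∧ (∃ t, x ^ n = t * x ^ (n+1)) := by
  obtain ⟨⟨nr, hr⟩, ⟨nl, hl⟩⟩ := hpi
  set N := max (max nr nl) 1 with hN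
  have hNr : nr ≤ N := le_trans (le_max_left nr nl) (le_max_left _ 1)
  have hNl : nl ≤ N := le_trans (le_max_right nr nl) (le_max_left _ 1)
  refine ⟨N, le_max_right _ _, ?_, ?_⟩
  · have h1 := hr N hNr
    have h2 := hr (N + 1) (by omega)
    have hx : x ^ N ∈ {y : R | ∃ r, y = x ^ N * r} := ⟨1, (mul_one _).symm⟩
    rw [h1, ← h2] at hx
    exact hx
  · have h1 := hl N hNl
    have h2 := hl (N + 1) (by omega)
    have hx : x ^ N ∈ {y : R | ∃ r, y = r * x ^ N} := ⟨1, (one_mul _).symm⟩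
    rw [h1, ← h2] at hx
    exact hx

/-- Primitive idempotents in a π-regular ring have local corners. -/
lemma primitive_local (h : ∀ a : R, IsPiRegularElem a) {p : R} (hp : Primi p) :
    IsLocalCorner p := by
  obtain ⟨hpp, hp0, hprim⟩ := hp
  refine ⟨hp0, fun x hx => ?_⟩
  have hpx : p * x = x := (corner_of hpp hx).1
  have hxp : x * p = x := (corner_of hpp hx).2
  have hpxk : ∀ k, 1 ≤ k → p * x ^ k = x ^ k ∧ x ^ k * p = x ^ k := by
    intro k hk
    obtain ⟨m, rfl⟩ : ∃ m, k = m + 1 := ⟨k-1, by omega⟩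
    constructor
    · rw [pow_succ', ← mul_assoc, hpx]
    · rw [pow_succ, mul_assoc, hxp]
  obtain ⟨n, hn1, ⟨s', hs'⟩, ⟨t', ht'⟩⟩ := exists_spr (h x)
  have hs : x ^ n = x ^ (n+1) * (p * s' * p) := by
    calc x ^ n = x ^ n * p := ((hpxk n hn1).2).symm
    _ = (x ^ (n+1) * s') * p := by rw [← hs']
    _ = ((x ^ (n+1) * p) * s') * p := by rw [(hpxk (n+1) (by omega)).2]
    _ = x ^ (n+1) * (p * s' * p) := by noncomm_ring
  have ht : x ^ n = (p * t' * p) * x ^ (n+1) := by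
    calc x ^ n = p * x ^ n := ((hpxk n hn1).1).symm
    _ = p * (t' * x ^ (n+1)) := by rw [← ht']
    _ = p * (t' * (p * x ^ (n+1))) := by rw [(hpxk (n+1) (by omega)).1]
    _ = (p * t' * p) * x ^ (n+1) := by noncomm_ring
  obtain ⟨S, hS_def⟩ : ∃ S : R, S = p * s' * p := ⟨_, rfl⟩
  rw [← hS_def] at hs
  have hSp : S * p = S := by rw [hS_def, mul_assoc, hpp]
  obtain ⟨e, d, he_def, hee, hxne, hcomm, hxd, hdx, hed, hde⟩ := fitting hn1 hs ht
  have hpe : p * e = e := by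
    rw [he_def, ← mul_assoc, (hpxk n hn1).1]
  have hSnp : S ^ n * p = S ^ n := by
    obtain ⟨m, rfl⟩ : ∃ m, n = m + 1 := ⟨n-1, by omega⟩
    rw [pow_succ, mul_assoc, hSp]
  have hep : e * p = e := by rw [he_def, mul_assoc, hSnp]
  rcases hprim e hee hpe hep with he0 | hep'
  · -- e = 0 : x is nilpotent in the corner, so p - x is invertible
    right
    have hxn0 : x ^ n = 0 := by rw [← hxne, he0, mul_zero]
    obtain ⟨u, hu_def⟩ : ∃ u : R, u = ∑ i ∈ Finset.range n, x ^ i := ⟨_, rfl⟩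
    have hgu : (1 - x) * u = 1 := by
      have := mul_geom_sum x n
      rw [← hu_def] at this
      have h2 : (1 - x) * u = -((x - 1) * u) := by noncomm_ring
      rw [h2, this, hxn0]; noncomm_ring
    have hug : u * (1 - x) = 1 := by
      have := geom_sum_mul x n
      rw [← hu_def] at this
      have h2 : u * (1 - x) = -(u * (x - 1)) := by noncomm_ring
      rw [h2, this, hxn0]; noncomm_ring
    refine ⟨p * u * p, of_corner (corner_elem hpp u).1 (corner_elem hpp u).2, ?_, ?_⟩
    · have e1 : (p - x) * (p * u * p) = (p - x) * (u * p) := by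
        rw [show (p - x) * (p * u * p) = ((p - x) * p) * (u * p) from by noncomm_ring,
          show (p - x) * p = p - x from by rw [sub_mul, hpp, hxp]]
      have hup : u * p = ∑ i ∈ Finset.range n, x ^ i * p := by
        rw [hu_def, Finset.sum_mul]
      have hterm : ∀ i ∈ Finset.range n, (p - 1) * (x ^ i * p) = 0 := by
        intro i _
        match i with
        | 0 => rw [pow_zero, one_mul, sub_mul, one_mul, hpp, sub_self]
        | (j+1) =>
          rw [(hpxk (j+1) (by omega)).2, sub_mul, one_mul, (hpxk (j+1) (by omega)).1, sub_self]
      have hzero : (p - 1) * (u * p) = 0 := by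
        rw [hup, Finset.mul_sum]
        exact Finset.sum_eq_zero hterm
      rw [e1, show p - x = (p - 1) + (1 - x) from by abel, add_mul, hzero,
        show (1 - x) * (u * p) = ((1 - x) * u) * p from by noncomm_ring, hgu, one_mul, zero_add]
    · have e1 : (p * u * p) * (p - x) = (p * u) * (p - x) := by
        rw [show (p * u * p) * (p - x) = (p * u) * (p * (p - x)) from by noncomm_ring,
          show p * (p - x) = p - x from by rw [mul_sub, hpp, hpx]]
      have hup : p * u = ∑ i ∈ Finset.range n, p * x ^ i := by
        rw [hu_def, Finset.mul_sum]
      have hterm : ∀ i ∈ Finset.range n, (p * x ^ i) * (p - 1) = 0 := by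
        intro i _
        match i with
        | 0 => rw [pow_zero, mul_one, mul_sub, hpp, mul_one, sub_self]
        | (j+1) =>
          rw [(hpxk (j+1) (by omega)).1, mul_sub, (hpxk (j+1) (by omega)).2, mul_one, sub_self]
      have hzero : (p * u) * (p - 1) = 0 := by
        rw [hup, Finset.sum_mul]
        exact Finset.sum_eq_zero hterm
      rw [e1, show p - x = (p - 1) + (1 - x) from by abel, mul_add, hzero,
        show (p * u) * (1 - x) = p * (u * (1 - x)) from by noncomm_ring, hug, mul_one, zero_add]
  · -- e = p : x is invertible in the corner with inverse d
    left
    refine ⟨d, ?_, ?_, ?_⟩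
    · rw [← hep']
      exact of_corner hed hde
    · rw [← hep']; exact hxd
    · rw [← hep']; exact hdx

/-- A decomposition of an idempotent as an orthogonal sum of primitive idempotents. -/
def Decompo (e : R) : Prop := ∃ L : List R, (∀ q ∈ L, Primi q) ∧
  List.Pairwise (fun a b => a * b = 0 ∧ b * a = 0) L ∧
  (∀ q ∈ L, q * e = q ∧ e * q = q) ∧ L.sum = e

lemma split_bad (e : R) (hbad : e * e = e ∧ e ≠ 0 ∧ ¬ Decompo e) :
    ∃ fg : R × R,
      (fg.1 * fg.1 = fg.1 ∧ fg.1 ≠ 0 ∧ fg.1 * e = fg.1 ∧ e * fg.1 = fg.1) ∧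
      (fg.2 * fg.2 = fg.2 ∧ fg.2 ≠ 0 ∧ ¬ Decompo fg.2) ∧
      (fg.2 * e = fg.2 ∧ e * fg.2 = fg.2) ∧ fg.1 * fg.2 = 0 ∧ fg.2 * fg.1 = 0 := by
  obtain ⟨hee, he0, hnd⟩ := hbad
  have hnp : ¬ Primi e := by
    intro hp
    exact hnd ⟨[e], by simp [hp], by simp, by simp [hee], by simp⟩
  have hC : ¬ ∀ g : R, g * g = g → e * g = g → g * e = g → g = 0 ∨ g = e := by
    intro hC
    exact hnp ⟨hee, he0, hC⟩
  push_neg at hC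
  obtain ⟨g, hgg, hegg, hgee, hg0, hge⟩ := hC
  have hg'g' : (e - g) * (e - g) = e - g := by
    rw [sub_mul, mul_sub, mul_sub, hee, hegg, hgee, hgg]; abel
  have hg'0 : e - g ≠ 0 := fun h0 => hge (by rwa [sub_eq_zero, eq_comm] at h0)
  have hgg' : g * (e - g) = 0 := by rw [mul_sub, hgee, hgg, sub_self]
  have hg'g : (e - g) * g = 0 := by rw [sub_mul, hegg, hgg, sub_self]
  have hg'e : (e - g) * e = e - g := by rw [sub_mul, hee, hgee]
  have heg' : e * (e - g) = e - g := by rw [mul_sub, hee, hegg]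
  have hclaim : ¬ Decompo g ∨ ¬ Decompo (e - g) := by
    by_contra hcon
    push_neg at hcon
    obtain ⟨⟨L1, h1p, h1pw, h1le, h1sum⟩, ⟨L2, h2p, h2pw, h2le, h2sum⟩⟩ := hcon
    refine hnd ⟨L1 ++ L2, ?_, ?_, ?_, ?_⟩
    · intro q hq
      rcases List.mem_append.1 hq with hq | hq
      · exact h1p q hq
      · exact h2p q hq
    · refine List.pairwise_append.2 ⟨h1pw, h2pw, ?_⟩
      intro a ha b hb
      constructor
      · conv_lhs => rw [← (h1le a ha).1, ← (h2le b hb).2]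
        rw [show (a * g) * ((e - g) * b) = a * (g * (e - g)) * b from by noncomm_ring,
          hgg', mul_zero, zero_mul]
      · conv_lhs => rw [← (h2le b hb).1, ← (h1le a ha).2]
        rw [show (b * (e - g)) * (g * a) = b * ((e - g) * g) * a from by noncomm_ring,
          hg'g, mul_zero, zero_mul]
    · intro q hq
      rcases List.mem_append.1 hq with hq | hq
      · constructor
        · conv_lhs => rw [← (h1le q hq).1]
          rw [mul_assoc, hgee, (h1le q hq).1]
        · conv_lhs => rw [← (h1le q hq).2]
          rw [← mul_assoc, hegg, (h1le q hq).2]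
      · constructor
        · conv_lhs => rw [← (h2le q hq).1]
          rw [mul_assoc, hg'e, (h2le q hq).1]
        · conv_lhs => rw [← (h2le q hq).2]
          rw [← mul_assoc, heg', (h2le q hq).2]
    · rw [List.sum_append, h1sum, h2sum]; abel
  rcases hclaim with hb | hb
  · exact ⟨(e - g, g), ⟨hg'g', hg'0, hg'e, heg'⟩, ⟨hgg, hg0, hb⟩, ⟨hgee, hegg⟩, hg'g, hgg'⟩
  · exact ⟨(g, e - g), ⟨hgg, hg0, hgee, hegg⟩, ⟨hg'g', hg'0, hb⟩, ⟨hg'e, heg'⟩, hgg', hg'g⟩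

lemma decomp_one (hno : NoInfiniteOrthogonalIdempotents R) : Decompo (1 : R) := by
  by_contra hnd
  have h10 : (1 : R) ≠ 0 := by
    intro h10
    exact hnd ⟨[], by simp, by simp, by simp, by simp [← h10]⟩
  have bad1 : (1:R) * 1 = 1 ∧ (1:R) ≠ 0 ∧ ¬ Decompo (1:R) := ⟨one_mul 1, h10, hnd⟩
  let T := {e : R // e * e = e ∧ e ≠ 0 ∧ ¬ Decompo e}
  let step : T → T := fun p => ⟨(Classical.choose (split_bad p.1 p.2)).2,
    (Classical.choose_spec (split_bad p.1 p.2)).2.1⟩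
  let seq : ℕ → T := fun n => Nat.rec ⟨1, bad1⟩ (fun _ p => step p) n
  have hseq : ∀ n, seq (n+1) = step (seq n) := fun n => rfl
  let F : ℕ → R := fun n => (Classical.choose (split_bad (seq n).1 (seq n).2)).1
  have hspec := fun n => Classical.choose_spec (split_bad (seq n).1 (seq n).2)
  have hFi : ∀ n, F n * F n = F n := fun n => (hspec n).1.1
  have hF0 : ∀ n, F n ≠ 0 := fun n => (hspec n).1.2.1
  have hsucc1 : ∀ n, (seq (n+1)).1 * (seq n).1 = (seq (n+1)).1 ∧
      (seq n).1 * (seq (n+1)).1 = (seq (n+1)).1 := fun n => (hspec n).2.2.1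
  have hFsucc : ∀ n, F n * (seq (n+1)).1 = 0 ∧ (seq (n+1)).1 * F n = 0 := fun n =>
    (hspec n).2.2.2
  have hchain : ∀ m n, m ≤ n → (seq n).1 * (seq m).1 = (seq n).1 ∧
      (seq m).1 * (seq n).1 = (seq n).1 := by
    intro m n hmn
    induction n, hmn using Nat.le_induction with
    | base => exact ⟨(seq m).2.1, (seq m).2.1⟩
    | succ n hmn ih =>
      constructor
      · calc (seq (n+1)).1 * (seq m).1
            = ((seq (n+1)).1 * (seq n).1) * (seq m).1 := by rw [(hsucc1 n).1]
        _ = (seq (n+1)).1 * ((seq n).1 * (seq m).1) := by rw [mul_assoc]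
        _ = (seq (n+1)).1 * (seq n).1 := by rw [ih.1]
        _ = (seq (n+1)).1 := (hsucc1 n).1
      · calc (seq m).1 * (seq (n+1)).1
            = (seq m).1 * ((seq n).1 * (seq (n+1)).1) := by rw [(hsucc1 n).2]
        _ = ((seq m).1 * (seq n).1) * (seq (n+1)).1 := by rw [← mul_assoc]
        _ = (seq n).1 * (seq (n+1)).1 := by rw [ih.2]
        _ = (seq (n+1)).1 := (hsucc1 n).2
  have hFle : ∀ n, F n * (seq n).1 = F n ∧ (seq n).1 * F n = F n := fun n =>
    ⟨(hspec n).1.2.2.1, (hspec n).1.2.2.2⟩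
  have horth : ∀ m n, m < n → F m * F n = 0 ∧ F n * F m = 0 := by
    intro m n hmn
    have hc := hchain (m+1) n hmn
    have h1 : F n * (seq (m+1)).1 = F n := by
      calc F n * (seq (m+1)).1 = (F n * (seq n).1) * (seq (m+1)).1 := by rw [(hFle n).1]
      _ = F n * ((seq n).1 * (seq (m+1)).1) := by rw [mul_assoc]
      _ = F n * (seq n).1 := by rw [hc.1]
      _ = F n := (hFle n).1
    have h2 : (seq (m+1)).1 * F n = F n := by
      calc (seq (m+1)).1 * F n = (seq (m+1)).1 * ((seq n).1 * F n) := by rw [(hFle n).2]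
      _ = ((seq (m+1)).1 * (seq n).1) * F n := by rw [← mul_assoc]
      _ = (seq n).1 * F n := by rw [hc.2]
      _ = F n := (hFle n).2
    constructor
    · calc F m * F n = F m * ((seq (m+1)).1 * F n) := by rw [h2]
      _ = (F m * (seq (m+1)).1) * F n := by rw [← mul_assoc]
      _ = 0 := by rw [(hFsucc m).1, zero_mul]
    · calc F n * F m = (F n * (seq (m+1)).1) * F m := by rw [h1]
      _ = F n * ((seq (m+1)).1 * F m) := by rw [mul_assoc]
      _ = 0 := by rw [(hFsucc m).2, mul_zero]
  exact hno ⟨F, hFi, hF0, fun m n hmn => by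
    rcases Nat.lt_or_ge m n with hlt | hge
    · exact (horth m n hlt).1
    · exact (horth n m (by omega)).2⟩

lemma forward (hs : IsSemiperfectRing R) : NoInfiniteOrthogonalIdempotents R := by
  rintro ⟨f, hfi, hf0, hforth⟩
  obtain ⟨n, e, hi, ho, hsum, hloc⟩ := hs
  exact bound n 1 e (fun i => hi i) ho hsum hloc (fun k : Fin (n+1) => f k)
    (fun k => hfi k) (fun k => hf0 k)
    (fun j k hjk => hforth _ _ (fun hv => hjk (Fin.val_injective hv)))
    (fun k => one_mul _) (fun k => mul_one _)

lemma backward (h : ∀ a : R, IsPiRegularElem a)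
    (hno : NoInfiniteOrthogonalIdempotents R) : IsSemiperfectRing R := by
  obtain ⟨L, hLp, hLpw, hLle, hLsum⟩ := decomp_one hno
  have hget : ∀ i : Fin L.length, L.get i ∈ L := fun i => by have := L.get_mem i; simpa using this
  refine ⟨L.length, L.get, fun i => (hLp _ (hget i)).1, ?_, ?_,
    fun i => primitive_local h (hLp _ (hget i))⟩
  · intro i j hij
    have hpw := List.pairwise_iff_get.1 hLpw
    rcases lt_or_gt_of_ne hij with hlt | hlt
    · exact (hpw i j hlt).1
    · exact (hpw j i hlt).2
  · rw [← List.sum_ofFn, List.ofFn_get, hLsum]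

end PiRegAux

/-- A π-regular ring is semiperfect iff it contains no infinite set of nonzero
orthogonal idempotents. -/
theorem piRegular_semiperfect_iff {R : Type*} [Ring R]
    (h : ∀ a : R, IsPiRegularElem a) :
    IsSemiperfectRing R ↔ NoInfiniteOrthogonalIdempotents R := by
  constructor
  · exact PiRegAux.forward
  · exact PiRegAux.backward h
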